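/- Let K = HahnSeries ℝ ℂ be the field of generalized Laurent series with complex coefficients and real exponents, and for λ ∈ ℝ write s^λ ∈ K for the monomial HahnSeries.single λ 1 (so s = s¹). Let n ≥ 1 and 0 ≤ k ≤ n−1 be integers, let λ ∈ ℝ, and let p₁, …, p_n ∈ K be nonzero elements satisfying: p_i − s·(p₁⋯p_n)⁻¹ = 0 for all 1 ≤ i ≤ k, and p_i − s·(p₁⋯p_n)⁻¹ + s^{−λ}·p_{k+1}⋯p_n = 0 for all k+1 ≤ i ≤ n. Then p₁ = ⋯ = p_k and p_{k+1} = ⋯ = p_n; writing z for the common value of p_{k+1}, …, p_n, one has z^{n−k}·(z + s^{−λ}·z^{n−k})^{k+1} = s; and if moreover k ≥ 1 then, writing y for the common value of p₁, …, p_k, one has y^{k+1}·z^{n−k} = s and (k+1)·ord(y) + (n−k)·ord(z) = 1, where ord(x) denotes the smallest exponent in the support of a nonzero Hahn series x. -/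

import Mathlib

open HahnSeries

/-- The field of generalized Laurent series with complex coefficients and real exponents. -/
abbrev GenLaurent : Type := HahnSeries ℝ ℂ

/-- The monomial `s^λ`. -/
noncomputable def sPow (l : ℝ) : GenLaurent := HahnSeries.single l (1 : ℂ)

/-- Critical points of the Landau–Ginzburg superpotential of the toric blowup
`(X_k^{2n}, ω_λ)` of `ℂPⁿ` along a `k`-dimensional face: the first `k` coordinates agree, the
last `n−k` coordinates agree, the common value `z` of the last coordinates satisfies
`z^{n−k}(z + s^{−λ} z^{n−k})^{k+1} = s`, and for `k ≥ 1` the common values `y`, `z` satisfy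
`y^{k+1} z^{n−k} = s` and `(k+1) ord(y) + (n−k) ord(z) = 1`. -/
theorem critical_point_structure (n k : ℕ) (hn : 1 ≤ n) (hk : k ≤ n - 1) (lam : ℝ)
    (p : Fin n → GenLaurent) (hp : ∀ i, p i ≠ 0)
    (h1 : ∀ i : Fin n, (i : ℕ) < k → p i - sPow 1 * (∏ j, p j)⁻¹ = 0)
    (h2 : ∀ i : Fin n, k ≤ (i : ℕ) →
      p i - sPow 1 * (∏ j, p j)⁻¹
        + sPow (-lam) * (∏ j ∈ Finset.univ.filter (fun j : Fin n => k ≤ (j : ℕ)), p j) = 0) :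
    (∀ i j : Fin n, (i : ℕ) < k → (j : ℕ) < k → p i = p j) ∧
    (∀ i j : Fin n, k ≤ (i : ℕ) → k ≤ (j : ℕ) → p i = p j) ∧
    (∀ i : Fin n, k ≤ (i : ℕ) →
      (p i) ^ (n - k) * (p i + sPow (-lam) * (p i) ^ (n - k)) ^ (k + 1) = sPow 1) ∧
    (1 ≤ k → ∀ i j : Fin n, (i : ℕ) < k → k ≤ (j : ℕ) →
      (p i) ^ (k + 1) * (p j) ^ (n - k) = sPow 1 ∧
      ((k : ℝ) + 1) * (p i).order + ((n : ℝ) - (k : ℝ)) * (p j).order = 1) := by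
  have hkn : k < n := lt_of_le_of_lt hk (Nat.sub_lt hn one_pos)
  set P : GenLaurent := ∏ j, p j with hP
  have hPne : P ≠ 0 := Finset.prod_ne_zero_iff.mpr fun j _ => hp j
  set u : GenLaurent := sPow 1 * P⁻¹ with hu
  set Q : GenLaurent := ∏ j ∈ Finset.univ.filter (fun j : Fin n => k ≤ (j : ℕ)), p j with hQ
  -- values
  have hy : ∀ i : Fin n, (i : ℕ) < k → p i = u := fun i hi => by
    have := h1 i hi; linear_combination this
  have hz : ∀ i : Fin n, k ≤ (i : ℕ) → p i = u - sPow (-lam) * Q := fun i hi => by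
    have := h2 i hi; linear_combination this
  -- filter cards
  have hfe : Finset.univ.filter (fun j : Fin n => k ≤ (j : ℕ)) = Finset.Ici (⟨k, hkn⟩ : Fin n) := by
    ext j; simp [Fin.le_def]
  have hfc : (Finset.univ.filter (fun j : Fin n => k ≤ (j : ℕ))).card = n - k := by
    rw [hfe, Fin.card_Ici]
  have hfe' : Finset.univ.filter (fun j : Fin n => ¬ k ≤ (j : ℕ)) = Finset.Iio (⟨k, hkn⟩ : Fin n) := by
    ext j; simp [Fin.lt_def]
  have hfc' : (Finset.univ.filter (fun j : Fin n => ¬ k ≤ (j : ℕ))).card = k := by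
    rw [hfe', Fin.card_Iio]
  -- Q = z ^ (n-k) for any i with k ≤ i
  have hQz : ∀ i : Fin n, k ≤ (i : ℕ) → Q = (p i) ^ (n - k) := by
    intro i hi
    have hconst : ∀ j ∈ Finset.univ.filter (fun j : Fin n => k ≤ (j : ℕ)), p j = p i := by
      intro j hj
      exact (hz j (by simpa using (Finset.mem_filter.mp hj).2)).trans (hz i hi).symm
    rw [hQ, Finset.prod_congr rfl hconst, Finset.prod_const, hfc]
  -- P = u^k * Q
  have hPuQ : P = u ^ k * Q := by
    rw [hP, ← Finset.prod_filter_mul_prod_filter_not Finset.univ (fun j : Fin n => k ≤ (j : ℕ)) p,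
      ← hQ, Finset.prod_congr rfl (fun j hj => hy j (by
        have := (Finset.mem_filter.mp hj).2; omega)), Finset.prod_const, hfc']
    ring
  have hs : sPow 1 = u * P := by
    rw [hu]; field_simp
  -- common values
  have c1 : ∀ i j : Fin n, (i : ℕ) < k → (j : ℕ) < k → p i = p j := fun i j hi hj => by
    rw [hy i hi, hy j hj]
  have c2 : ∀ i j : Fin n, k ≤ (i : ℕ) → k ≤ (j : ℕ) → p i = p j := fun i j hi hj => by
    rw [hz i hi, hz j hj]
  have c3 : ∀ i : Fin n, k ≤ (i : ℕ) →
      (p i) ^ (n - k) * (p i + sPow (-lam) * (p i) ^ (n - k)) ^ (k + 1) = sPow 1 := by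
    intro i hi
    have hQi := hQz i hi
    have hui : p i + sPow (-lam) * (p i) ^ (n - k) = u := by
      rw [← hQi, hz i hi]; ring
    rw [hui, hs, hPuQ, hQi]; ring
  refine ⟨c1, c2, c3, ?_⟩
  intro hk1 i j hi hj
  have hyi := hy i hi
  have key : (p i) ^ (k + 1) * (p j) ^ (n - k) = sPow 1 := by
    rw [hyi, hs, hPuQ, hQz j hj]; ring
  refine ⟨key, ?_⟩
  have horder : ((p i) ^ (k + 1) * (p j) ^ (n - k)).order = (sPow 1).order := by rw [key]
  rw [order_mul (pow_ne_zero _ (hp i)) (pow_ne_zero _ (hp j)), order_pow, order_pow] at horder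
  have hords : (sPow 1).order = 1 := order_single one_ne_zero
  rw [hords] at horder
  have hnk : ((n - k : ℕ) : ℝ) = (n : ℝ) - (k : ℝ) := by
    push_cast [Nat.cast_sub hkn.le]; ring
  rw [nsmul_eq_mul, nsmul_eq_mul] at horder
  push_cast at horder
  rw [hnk] at horder
  linear_combination horder
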